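/- Let A and B be abelian subgroups of PSL(2,ℂ) such that every non-identity element of A and every non-identity element of B has infinite order, and suppose that A ∩ B contains a non-identity element. Then the subgroup of PSL(2,ℂ) generated by A ∪ B is abelian. -/

import Mathlib

/-- `SL(2,ℂ)`: 2×2 complex matrices of determinant 1. -/
abbrev SL2C := Matrix.SpecialLinearGroup (Fin 2) ℂ

/-- `PSL(2,ℂ)`: the quotient of `SL(2,ℂ)` by its center `{I, -I}`. -/
abbrev PSL2C := SL2C ⧸ Subgroup.center SL2C

lemma span_of_comm (X M : Matrix (Fin 2) (Fin 2) ℂ)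
    (h : X 0 1 ≠ 0 ∨ X 1 0 ≠ 0 ∨ X 0 0 ≠ X 1 1)
    (hc : M * X = X * M) : ∃ α β : ℂ, M = α • 1 + β • X := by
  have e : ∀ i j, (M * X) i j = (X * M) i j := fun i j => by rw [hc]
  have e01 := e 0 1; have e10 := e 1 0; have e11 := e 1 1
  simp only [Matrix.mul_apply, Fin.sum_univ_two] at e01 e10 e11
  rcases eq_or_ne (X 0 1) 0 with h1 | h1
  · rcases eq_or_ne (X 1 0) 0 with h2 | h2
    · have h3 : X 0 0 ≠ X 1 1 := by
        rcases h with h | h | h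
        · exact absurd h1 h
        · exact absurd h2 h
        · exact h
      have h01 : M 0 1 = 0 := by
        have hz : M 0 1 * (X 1 1 - X 0 0) = 0 := by
          linear_combination e01 + (M 1 1 - M 0 0) * h1
        rcases mul_eq_zero.mp hz with h' | h'
        · exact h'
        · exact absurd (sub_eq_zero.mp h').symm h3
      have h10 : M 1 0 = 0 := by
        have hz : M 1 0 * (X 0 0 - X 1 1) = 0 := by
          linear_combination e10 + (M 0 0 - M 1 1) * h2
        rcases mul_eq_zero.mp hz with h' | h'
        · exact h'
        · exact absurd (sub_eq_zero.mp h') h3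
      have hd : X 0 0 - X 1 1 ≠ 0 := sub_ne_zero.mpr h3
      refine ⟨M 0 0 - ((M 0 0 - M 1 1) / (X 0 0 - X 1 1)) * X 0 0,
        (M 0 0 - M 1 1) / (X 0 0 - X 1 1), ?_⟩
      ext i j
      fin_cases i <;> fin_cases j <;>
        simp only [Matrix.add_apply, Matrix.smul_apply, Matrix.one_apply, smul_eq_mul,
          Fin.isValue, if_true, if_false, mul_one, mul_zero, zero_add, add_zero, one_ne_zero,
          Fin.zero_eta, Fin.mk_one, zero_ne_one]
      · field_simp
        ring
      · simp [h01, h1]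
      · simp [h10, h2]
      · field_simp
        ring
    · refine ⟨M 1 1 - (M 1 0 / X 1 0) * X 1 1, M 1 0 / X 1 0, ?_⟩
      ext i j
      fin_cases i <;> fin_cases j <;>
        simp only [Matrix.add_apply, Matrix.smul_apply, Matrix.one_apply, smul_eq_mul,
          Fin.isValue, if_true, if_false, mul_one, mul_zero, zero_add, add_zero, one_ne_zero,
          Fin.zero_eta, Fin.mk_one, zero_ne_one]
      · field_simp
        linear_combination -e10
      · field_simp
        linear_combination -e11
      · field_simp
      · field_simp
        ring
  · refine ⟨M 1 1 - (M 0 1 / X 0 1) * X 1 1, M 0 1 / X 0 1, ?_⟩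
    ext i j
    fin_cases i <;> fin_cases j <;>
      simp only [Matrix.add_apply, Matrix.smul_apply, Matrix.one_apply, smul_eq_mul,
        Fin.isValue, if_true, if_false, mul_one, mul_zero, zero_add, add_zero, one_ne_zero,
          Fin.zero_eta, Fin.mk_one, zero_ne_one]
    · field_simp
      linear_combination e01
    · field_simp
    · field_simp
      linear_combination e11
    · field_simp
      ring

lemma sq_eq_neg_one (X : Matrix (Fin 2) (Fin 2) ℂ) (hdet : X.det = 1)
    (htr : X.trace = 0) : X * X = -1 := by
  rw [Matrix.det_fin_two] at hdet
  rw [Matrix.trace_fin_two] at htr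
  ext i j
  fin_cases i <;> fin_cases j <;>
    simp only [Matrix.mul_apply, Fin.sum_univ_two, Matrix.neg_apply, Matrix.one_apply,
      Fin.isValue, if_true, if_false, neg_zero, Fin.mk_zero, Fin.mk_one, Fin.zero_eta, Fin.mk_one, one_ne_zero, zero_ne_one, if_false, neg_zero]
  · linear_combination -hdet + X 0 0 * htr
  · linear_combination X 0 1 * htr
  · linear_combination X 1 0 * htr
  · linear_combination -hdet + X 1 1 * htr

lemma center_val (z : SL2C) (hz : z ∈ Subgroup.center SL2C) :
    (z : Matrix (Fin 2) (Fin 2) ℂ) = 1 ∨ (z : Matrix (Fin 2) (Fin 2) ℂ) = -1 := by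
  obtain ⟨r, hr, hrz⟩ := Matrix.SpecialLinearGroup.mem_center_iff.mp hz
  simp only [Fintype.card_fin] at hr
  have hr2 : r * r = 1 := by rw [← pow_two]; exact hr
  rcases mul_self_eq_one_iff.mp hr2 with h | h
  · left; rw [← hrz, h, map_one]
  · right; rw [← hrz, h, map_neg, map_one]

lemma center_of_val (z : SL2C)
    (hz : (z : Matrix (Fin 2) (Fin 2) ℂ) = 1 ∨ (z : Matrix (Fin 2) (Fin 2) ℂ) = -1) :
    z ∈ Subgroup.center SL2C := by
  apply Matrix.SpecialLinearGroup.mem_center_iff.mpr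
  rcases hz with h | h
  · exact ⟨1, by simp, by rw [h, map_one]⟩
  · exact ⟨-1, by simp [Fintype.card_fin], by rw [h, map_neg, map_one]⟩

example (X : SL2C) (hx1 : (QuotientGroup.mk X : PSL2C) ≠ 1) :
    (X : Matrix (Fin 2) (Fin 2) ℂ) 0 1 ≠ 0 ∨ (X : Matrix (Fin 2) (Fin 2) ℂ) 1 0 ≠ 0 ∨
      (X : Matrix (Fin 2) (Fin 2) ℂ) 0 0 ≠ (X : Matrix (Fin 2) (Fin 2) ℂ) 1 1 := by
  by_contra hcon
  push_neg at hcon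
  obtain ⟨hb, hc, hd⟩ := hcon
  have hdet : (X : Matrix (Fin 2) (Fin 2) ℂ).det = 1 := X.2
  rw [Matrix.det_fin_two, hb, hc, ← hd] at hdet
  simp only [mul_zero, sub_zero] at hdet
  apply hx1
  rw [QuotientGroup.eq_one_iff]
  apply center_of_val
  rcases mul_self_eq_one_iff.mp hdet with h | h
  · left; ext i j; fin_cases i <;> fin_cases j <;>
      simp_all [Matrix.one_apply]
  · right; ext i j; fin_cases i <;> fin_cases j <;>
      simp_all [Matrix.one_apply]

lemma nonscalar (X : SL2C) (hx1 : (QuotientGroup.mk X : PSL2C) ≠ 1) :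
    (X : Matrix (Fin 2) (Fin 2) ℂ) 0 1 ≠ 0 ∨ (X : Matrix (Fin 2) (Fin 2) ℂ) 1 0 ≠ 0 ∨
      (X : Matrix (Fin 2) (Fin 2) ℂ) 0 0 ≠ (X : Matrix (Fin 2) (Fin 2) ℂ) 1 1 := by
  by_contra hcon
  push_neg at hcon
  obtain ⟨hb, hc, hd⟩ := hcon
  have hdet : (X : Matrix (Fin 2) (Fin 2) ℂ).det = 1 := X.2
  rw [Matrix.det_fin_two, hb, hc, ← hd] at hdet
  simp only [mul_zero, sub_zero] at hdet
  apply hx1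
  rw [QuotientGroup.eq_one_iff]
  apply center_of_val
  rcases mul_self_eq_one_iff.mp hdet with h | h
  · left; ext i j; fin_cases i <;> fin_cases j <;> simp_all [Matrix.one_apply]
  · right; ext i j; fin_cases i <;> fin_cases j <;> simp_all [Matrix.one_apply]

/-- Lift of a commuting relation from PSL to SL. -/
lemma lift_comm (X A : SL2C)
    (hxo : ¬ IsOfFinOrder (QuotientGroup.mk X : PSL2C))
    (hcomm : (QuotientGroup.mk A : PSL2C) * QuotientGroup.mk X
        = QuotientGroup.mk X * QuotientGroup.mk A) :
    (A : Matrix (Fin 2) (Fin 2) ℂ) * (X : Matrix (Fin 2) (Fin 2) ℂ)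
      = (X : Matrix (Fin 2) (Fin 2) ℂ) * (A : Matrix (Fin 2) (Fin 2) ℂ) := by
  set Am := (A : Matrix (Fin 2) (Fin 2) ℂ) with hAm
  set Xm := (X : Matrix (Fin 2) (Fin 2) ℂ) with hXm
  have hmk : (QuotientGroup.mk (A * X) : PSL2C) = QuotientGroup.mk (X * A) := by
    simpa using hcomm
  have hz : (A * X)⁻¹ * (X * A) ∈ Subgroup.center SL2C := QuotientGroup.eq.mp hmk
  rcases center_val _ hz with h | h
  · have h1 : (A * X)⁻¹ * (X * A) = 1 := Subtype.ext h
    rw [inv_mul_eq_one] at h1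
    exact congrArg Subtype.val h1
  · exfalso
    have h2 : X * A = (A * X) * ((A * X)⁻¹ * (X * A)) := by group
    have hval : Xm * Am = -(Am * Xm) := by
      have h3 := congrArg Subtype.val h2
      rw [Matrix.SpecialLinearGroup.coe_mul, Matrix.SpecialLinearGroup.coe_mul, h,
        mul_neg_one, Matrix.SpecialLinearGroup.coe_mul] at h3
      exact h3
    have hAdet : Am.det = 1 := A.2
    have hAunit : IsUnit Am.det := by rw [hAdet]; exact isUnit_one
    have hAinv : Am * Am⁻¹ = 1 := Matrix.mul_nonsing_inv _ hAunit
    have hAinv' : Am⁻¹ * Am = 1 := Matrix.nonsing_inv_mul _ hAunit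
    have hXeq : Xm = -(Am * Xm * Am⁻¹) := by
      calc Xm = Xm * (Am * Am⁻¹) := by rw [hAinv, mul_one]
        _ = (Xm * Am) * Am⁻¹ := by rw [mul_assoc]
        _ = -(Am * Xm * Am⁻¹) := by rw [hval]; simp
    have htr : Xm.trace = 0 := by
      have h3 : Xm.trace = -Xm.trace := by
        conv_lhs => rw [hXeq]
        rw [Matrix.trace_neg, Matrix.trace_mul_comm (Am * Xm), ← mul_assoc, hAinv', one_mul]
      have h4 : Xm.trace + Xm.trace = 0 := by linear_combination h3
      exact add_self_eq_zero.mp h4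
    have hsq : Xm * Xm = -1 := sq_eq_neg_one _ X.2 htr
    have hx2 : (QuotientGroup.mk X : PSL2C) ^ 2 = 1 := by
      rw [pow_two, ← QuotientGroup.mk_mul, QuotientGroup.eq_one_iff]
      apply center_of_val
      right
      rw [Matrix.SpecialLinearGroup.coe_mul]
      exact hsq
    exact hxo (isOfFinOrder_iff_pow_eq_one.mpr ⟨2, two_pos, hx2⟩)

lemma centralizer_abelian (x : PSL2C) (hx1 : x ≠ 1) (hxo : ¬ IsOfFinOrder x) :
    ∀ a b : PSL2C, a * x = x * a → b * x = x * b → a * b = b * a := by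
  obtain ⟨X, rfl⟩ := QuotientGroup.mk_surjective x
  intro a b ha hb
  obtain ⟨A, rfl⟩ := QuotientGroup.mk_surjective a
  obtain ⟨B, rfl⟩ := QuotientGroup.mk_surjective b
  have hAX := lift_comm X A hxo ha
  have hBX := lift_comm X B hxo hb
  have hX := nonscalar X hx1
  obtain ⟨α, β, hA⟩ := span_of_comm _ _ hX hAX
  obtain ⟨γ, δ, hB⟩ := span_of_comm _ _ hX hBX
  have hcomm : (A : Matrix (Fin 2) (Fin 2) ℂ) * B = (B : Matrix (Fin 2) (Fin 2) ℂ) * A := by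
    rw [hA, hB]
    simp only [Matrix.add_mul, Matrix.mul_add, Matrix.smul_mul, Matrix.mul_smul,
      smul_smul, one_mul, mul_one]
    simp only [smul_add, smul_smul]
    rw [mul_comm γ α, mul_comm δ α, mul_comm γ β, mul_comm δ β]
    abel
  have : A * B = B * A := Subtype.ext (by
    rw [Matrix.SpecialLinearGroup.coe_mul, Matrix.SpecialLinearGroup.coe_mul]; exact hcomm)
  rw [← QuotientGroup.mk_mul, ← QuotientGroup.mk_mul, this]

/-- If `A` and `B` are abelian subgroups of `PSL(2,ℂ)` whose non-identity elements all
have infinite order, and `A ∩ B` contains a non-identity element, then the subgroup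
generated by `A ∪ B` is abelian. -/
theorem abelian_amalgam_abelian (A B : Subgroup PSL2C)
    (hAcomm : ∀ a ∈ A, ∀ b ∈ A, a * b = b * a)
    (hBcomm : ∀ a ∈ B, ∀ b ∈ B, a * b = b * a)
    (hAtf : ∀ a ∈ A, a ≠ 1 → ¬ IsOfFinOrder a)
    (hBtf : ∀ b ∈ B, b ≠ 1 → ¬ IsOfFinOrder b)
    (hmeet : ∃ x : PSL2C, x ∈ A ⊓ B ∧ x ≠ 1) :
    ∀ a ∈ Subgroup.closure ((A : Set PSL2C) ∪ (B : Set PSL2C)),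
      ∀ b ∈ Subgroup.closure ((A : Set PSL2C) ∪ (B : Set PSL2C)), a * b = b * a := by
  obtain ⟨x, hxAB, hx1⟩ := hmeet
  obtain ⟨hxA, hxB⟩ := hxAB
  have hxo : ¬ IsOfFinOrder x := hAtf x hxA hx1
  have hsub : (A : Set PSL2C) ∪ (B : Set PSL2C) ⊆ (Subgroup.centralizer {x} : Subgroup PSL2C) := by
    rintro g (hg | hg) <;> rw [SetLike.mem_coe, Subgroup.mem_centralizer_iff] <;>
      rintro y hy <;> rw [Set.mem_singleton_iff] at hy <;> rw [hy]
    · exact hAcomm x hxA g hg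
    · exact hBcomm x hxB g hg
  have hle := Subgroup.closure_le (Subgroup.centralizer {x}) |>.mpr hsub
  intro a ha b hb
  have ha' := Subgroup.mem_centralizer_iff.mp (hle ha) x (Set.mem_singleton x)
  have hb' := Subgroup.mem_centralizer_iff.mp (hle hb) x (Set.mem_singleton x)
  exact centralizer_abelian x hx1 hxo a b ha'.symm hb'.symm
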